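/- arXiv:1306.3123 — 2 statements merged into one kernel-verified Lean document; each statement's English description precedes it below -/
import Mathlib

section
/- Let (n_i)_{i≥1} be a sequence of positive integers with n_1 ≥ 2, define u_0 = ε and u_i = u_{i-1} a (u_{i-1} b)^{n_i} u_{i-1} over {a,b}, and let U be the infinite word having every u_i as a prefix. Then for each i ≥ 1, both u_i a and u_i b are products of words from the set {u_{i-1} a, u_{i-1} b}, i.e. u_i a, u_i b ∈ {u_{i-1} a, u_{i-1} b}^+; and every occurrence of u_i in U starts at a position that is a multiple of |u_i| + 1: if U = x u_i y with x finite then (|u_i| + 1) divides |x|. -/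
open scoped BigOperators ENNReal

namespace PeriodicityComplexity

variable {A : Type*}

/-- The finite word `z` occurs in the infinite word `w` at the (0-based) index `j`,
i.e. `z` occupies positions `j+1, …, j+|z|` of `w`. -/
def OccursAt (w : ℕ → A) (z : List A) (j : ℕ) : Prop :=
  z = List.ofFn (fun t : Fin z.length => w (j + t))

/-- `z` is a (finite) factor of the infinite word `w`. -/
def IsFactor (w : ℕ → A) (z : List A) : Prop := ∃ j, OccursAt w z j

/-- An infinite word is uniformly recurrent if every factor occurs with bounded gaps. -/
def UniformlyRecurrent (w : ℕ → A) : Prop :=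
  ∀ z : List A, IsFactor w z → ∃ N : ℕ, ∀ j : ℕ, ∃ t, j ≤ t ∧ t < j + N ∧ OccursAt w z t

/-- An infinite word is periodic if some `p ≥ 1` is a period of all of it. -/
def Periodic (w : ℕ → A) : Prop := ∃ p : ℕ, 1 ≤ p ∧ ∀ i, w (i + p) = w i

/-- An infinite word is ultimately periodic if some `p ≥ 1` is a period from some point on. -/
def UltimatelyPeriodic (w : ℕ → A) : Prop :=
  ∃ p : ℕ, 1 ≤ p ∧ ∃ N : ℕ, ∀ i, N ≤ i → w (i + p) = w i

/-- The `e`-fold concatenation `v^e` of a finite word `v`. -/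
def wpow (v : List A) (e : ℕ) : List A := (List.replicate e v).flatten

/-- The prefix of length `i` of an infinite word. -/
def wordPrefix (w : ℕ → A) (i : ℕ) : List A := List.ofFn (fun t : Fin i => w t)

/-- `r` is a repetition word at position `i` of the infinite word `w` (`w = uv`, `|u| = i`):
`r` is nonempty, suffix-comparable with `u`, and a prefix of the infinite remainder `v`. -/
def IsRepWordAt (w : ℕ → A) (i : ℕ) (r : List A) : Prop :=
  r ≠ [] ∧ (r <:+ wordPrefix w i ∨ wordPrefix w i <:+ r) ∧ OccursAt w r i

/-- Local period of an infinite word at position `i`, as an extended nonnegative real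
(`⊤` if there is no repetition word at that position). -/
noncomputable def localPeriod (w : ℕ → A) (i : ℕ) : ℝ≥0∞ :=
  sInf ((fun r : List A => (r.length : ℝ≥0∞)) '' {r | IsRepWordAt w i r})

/-- Periodicity complexity `h_w(i) = (1/i) ∑_{j=1}^{i} p_w(j)` of an infinite word. -/
noncomputable def pcomplexity (w : ℕ → A) (i : ℕ) : ℝ≥0∞ :=
  (∑ j ∈ Finset.Icc 1 i, localPeriod w j) / (i : ℝ≥0∞)

/-- `r` is a repetition word at position `i` of the finite word `v` (`v = xy`, `|x| = i`):
`r` is nonempty, suffix-comparable with `x` and prefix-comparable with `y`. -/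
def IsRepWordAtF (v : List A) (i : ℕ) (r : List A) : Prop :=
  r ≠ [] ∧ (r <:+ v.take i ∨ v.take i <:+ r) ∧ (r <+: v.drop i ∨ v.drop i <+: r)

/-- Local period of a finite word at position `i`. -/
noncomputable def localPeriodF (v : List A) (i : ℕ) : ℕ :=
  sInf {n : ℕ | ∃ r : List A, IsRepWordAtF v i r ∧ r.length = n}

/-- Average local period `h(v) = (1/|v|) ∑_{i=1}^{|v|} p_v(i)` of a finite word. -/
noncomputable def hF (v : List A) : ℝ :=
  (∑ i ∈ Finset.Icc 1 v.length, (localPeriodF v i : ℝ)) / (v.length : ℝ)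

/-- An infinite word is of bounded repetition if the exponents of powers of nonempty
words occurring in it are bounded. -/
def BoundedRepetition (w : ℕ → A) : Prop :=
  ∃ E : ℕ, ∀ (v : List A) (e : ℕ), v ≠ [] → IsFactor w (wpow v e) → e ≤ E

/-- `p` is a period of the finite word `z`. -/
def HasPeriodF (z : List A) (p : ℕ) : Prop :=
  ∀ t : ℕ, t + p < z.length → z[t]? = z[t + p]?

/-- The (least) period of a finite word. -/
noncomputable def periodF (z : List A) : ℕ := sInf {p : ℕ | 1 ≤ p ∧ HasPeriodF z p}

/-- `r` is a return word to `z` in the infinite word `w`: `r` is the factor of `w` between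
two consecutive occurrences of `z`. -/
def IsReturnWord (w : ℕ → A) (z r : List A) : Prop :=
  r ≠ [] ∧ ∃ j : ℕ, OccursAt w z j ∧ OccursAt w z (j + r.length) ∧
    (∀ t, j < t → t < j + r.length → ¬ OccursAt w z t) ∧ OccursAt w r j

/-- `l` is the length of some return word to `z` in `w`. -/
def IsReturnLength (w : ℕ → A) (z : List A) (l : ℕ) : Prop :=
  ∃ r : List A, IsReturnWord w z r ∧ r.length = l

/-- The maximal return time of `z` in `w`. -/
noncomputable def maxReturnTime (w : ℕ → A) (z : List A) : ℕ :=
  sSup {l : ℕ | IsReturnLength w z l}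

/-- A finite word is unbordered if no proper nonempty prefix of it is also a suffix. -/
def Unbordered (z : List A) : Prop :=
  ∀ b : List A, b ≠ [] → b.length < z.length → b <+: z → ¬ b <:+ z

/-- A finite word is primitive if it is not a (trivial or nontrivial) power of a word
other than itself. -/
def Primitive (z : List A) : Prop :=
  ∀ (v : List A) (k : ℕ), z = wpow v k → k = 1

/-- A finite word is Lyndon if it is primitive and lexicographically minimal among its
conjugates: `z ≤ yx` for every factorization `z = xy`. -/
def IsLyndon [LinearOrder A] (z : List A) : Prop :=
  Primitive z ∧ ∀ x y : List A, z = x ++ y → z ≤ y ++ x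

end PeriodicityComplexity

namespace PeriodicityComplexity

variable {A : Type*}

/-- The words `u_0 = ε`, `u_i = u_{i-1} a (u_{i-1} b)^{n_i} u_{i-1}` of the generalized
Toeplitz construction. -/
def uSeq (a b : A) (nseq : ℕ → ℕ) : ℕ → List A
  | 0 => []
  | i + 1 =>
      uSeq a b nseq i ++ [a] ++ wpow (uSeq a b nseq i ++ [b]) (nseq (i + 1)) ++ uSeq a b nseq i

end PeriodicityComplexity


namespace ToeplitzAux

open PeriodicityComplexity List

variable {A : Type*} (a b : A) (nseq : ℕ → ℕ)

lemma occursAt_iff (w : ℕ → A) (z : List A) (j : ℕ) :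
    OccursAt w z j ↔ ∀ t (ht : t < z.length), z[t] = w (j + t) := by
  constructor
  · intro h t ht
    rw [List.getElem_of_eq h ht, List.getElem_ofFn]
  · intro h
    refine List.ext_getElem (by simp) ?_
    intro n h1 h2
    rw [List.getElem_ofFn]
    exact h n h1

lemma occursAt_of_prefix {U : ℕ → A} {z z' : List A} (h : z <+: z') {j : ℕ}
    (hocc : OccursAt U z' j) : OccursAt U z j := by
  rw [occursAt_iff] at *
  intro t ht
  obtain ⟨s, rfl⟩ := h
  calc z[t] = (z ++ s)[t]'(by simp; omega) := (List.getElem_append_left ht).symm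
    _ = U (j + t) := hocc t (by simp; omega)

lemma getElem_flatten_uniform {n : ℕ} {L : List (List A)} (h : ∀ x ∈ L, x.length = n)
    {q t : ℕ} (hq : q < L.length) (ht : t < n)
    (hlt : q * n + t < L.flatten.length) :
    L.flatten[q * n + t] = (L[q])[t]'(by rw [h _ (L.getElem_mem hq)]; exact ht) := by
  induction L generalizing q with
  | nil => simp at hq
  | cons x L ih =>
    have hx : x.length = n := h x mem_cons_self
    cases q with
    | zero =>
      simp only [Nat.zero_mul, Nat.zero_add, flatten_cons] at hlt ⊢
      rw [List.getElem_append_left (by omega)]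
      simp
    | succ q =>
      have e1 : (q + 1) * n = q * n + n := Nat.succ_mul q n
      have hLl : (x :: L).length = L.length + 1 := rfl
      have hfl : (x ++ L.flatten).length = n + L.flatten.length := by simp [hx]
      simp only [flatten_cons] at hlt ⊢
      rw [List.getElem_append_right (by omega)]
      have e2 : (q + 1) * n + t - x.length = q * n + t := by omega
      simp only [e2, List.getElem_cons_succ]
      exact ih (fun y hy => h y (mem_cons_of_mem _ hy)) (by omega) (by omega)

lemma length_wpow (v : List A) (e : ℕ) : (wpow v e).length = e * v.length := by
  simp [wpow, List.length_flatten, List.map_replicate, List.sum_replicate, smul_eq_mul]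

lemma length_uSeq_succ (i : ℕ) :
    (uSeq a b nseq (i + 1)).length + 1 = (nseq (i + 1) + 2) * ((uSeq a b nseq i).length + 1) := by
  simp [uSeq, length_wpow]
  ring

lemma le_length_uSeq (i : ℕ) : i ≤ (uSeq a b nseq i).length := by
  induction i with
  | zero => simp
  | succ i ih =>
    have h := length_uSeq_succ a b nseq i
    nlinarith

lemma uSeq_succ_concat (c : A) (i : ℕ) :
    uSeq a b nseq (i + 1) ++ [c] =
      (uSeq a b nseq i ++ [a]) ++ wpow (uSeq a b nseq i ++ [b]) (nseq (i + 1)) ++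
        (uSeq a b nseq i ++ [c]) := by
  simp [uSeq, List.append_assoc]

lemma uSeq_decomp (i j : ℕ) (hij : i ≤ j) :
    ∀ c : A, c = a ∨ c = b →
    ∃ L : List (List A), L ≠ [] ∧
      (∀ x ∈ L, x = uSeq a b nseq i ++ [a] ∨ x = uSeq a b nseq i ++ [b]) ∧
      L.flatten = uSeq a b nseq j ++ [c] := by
  induction j, hij using Nat.le_induction with
  | base =>
    intro c hc
    refine ⟨[uSeq a b nseq i ++ [c]], by simp, ?_, by simp⟩
    intro x hx
    simp only [mem_singleton] at hx
    subst hx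
    rcases hc with h | h <;> subst h
    · exact Or.inl rfl
    · exact Or.inr rfl
  | succ j hij ih =>
    intro c hc
    obtain ⟨La, hLa0, hLa1, hLa2⟩ := ih a (Or.inl rfl)
    obtain ⟨Lb, _, hLb1, hLb2⟩ := ih b (Or.inr rfl)
    obtain ⟨Lc, _, hLc1, hLc2⟩ := ih c hc
    refine ⟨La ++ (List.replicate (nseq (j + 1)) Lb).flatten ++ Lc, by simp [hLa0], ?_, ?_⟩
    · intro x hx
      simp only [mem_append, mem_flatten, mem_replicate] at hx
      rcases hx with (hx | ⟨l, ⟨-, rfl⟩, hx⟩) | hx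
      · exact hLa1 x hx
      · exact hLb1 x hx
      · exact hLc1 x hx
    · rw [flatten_append, flatten_append, uSeq_succ_concat, hLa2, hLc2]
      congr 1
      congr 1
      rw [flatten_flatten, map_replicate, hLb2]
      rfl

lemma prefix_eval {U : ℕ → A} (hU : ∀ i : ℕ, OccursAt U (uSeq a b nseq i) 0)
    (N t : ℕ) (ht : t < (uSeq a b nseq N).length) : (uSeq a b nseq N)[t] = U t := by
  have h := (occursAt_iff U _ 0).1 (hU N) t ht
  simpa using h

lemma occ_block {U : ℕ → A} (hU : ∀ i : ℕ, OccursAt U (uSeq a b nseq i) 0) (i q : ℕ) :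
    ∃ d : A, (d = a ∨ d = b) ∧
      OccursAt U (uSeq a b nseq i ++ [d]) (q * ((uSeq a b nseq i).length + 1)) := by
  set m := (uSeq a b nseq i).length + 1 with hm
  set j := (q + 1) * m with hj
  have hmpos : 1 ≤ m := by omega
  have hij : i ≤ j := by
    have h1 : i ≤ m := by have := le_length_uSeq a b nseq i; omega
    calc i ≤ m := h1
      _ ≤ (q + 1) * m := Nat.le_mul_of_pos_left m (by omega)
  obtain ⟨L, hL0, hL1, hL2⟩ := uSeq_decomp a b nseq i j hij a (Or.inl rfl)
  have hlen : ∀ x ∈ L, x.length = m := by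
    intro x hx
    rcases hL1 x hx with h | h <;> simp [h, hm]
  have hflat : L.flatten.length = (uSeq a b nseq j).length + 1 := by rw [hL2]; simp
  have hflen : L.flatten.length = L.length * m := by
    rw [length_flatten, List.eq_replicate_of_mem (l := map length L) (a := m)
      (by intro y hy; obtain ⟨x, hx, rfl⟩ := mem_map.1 hy; exact hlen x hx)]
    simp [smul_eq_mul, mul_comm]
  have hjlen : (q + 1) * m ≤ (uSeq a b nseq j).length := by
    have := le_length_uSeq a b nseq j
    omega
  have e1 : (q + 1) * m = q * m + m := Nat.succ_mul q m
  have hq : q < L.length := by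
    by_contra hcon
    push_neg at hcon
    have h2 : L.length * m ≤ q * m := Nat.mul_le_mul_right _ hcon
    omega
  obtain ⟨e, he, hxe⟩ : ∃ e, (e = a ∨ e = b) ∧ L[q] = uSeq a b nseq i ++ [e] := by
    rcases hL1 L[q] (L.getElem_mem hq) with h | h
    · exact ⟨a, Or.inl rfl, h⟩
    · exact ⟨b, Or.inr rfl, h⟩
  refine ⟨e, he, (occursAt_iff U _ _).2 ?_⟩
  intro t ht
  have ht' : t < m := by simpa [hm] using ht
  have hlt : q * m + t < (uSeq a b nseq j).length := by omega
  calc (uSeq a b nseq i ++ [e])[t]'ht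
      = (L[q]'hq)[t]'(by rw [hlen _ (L.getElem_mem hq)]; exact ht') := by
        simp only [← hxe]
    _ = L.flatten[q * m + t]'(by omega) := (getElem_flatten_uniform hlen hq ht' (by omega)).symm
    _ = (uSeq a b nseq j ++ [a])[q * m + t]'(by simp; omega) := by
        simp only [hL2]
    _ = (uSeq a b nseq j)[q * m + t]'hlt := List.getElem_append_left hlt
    _ = U (q * m + t) := prefix_eval a b nseq hU j _ hlt

lemma letter_uSeq_succ (i k : ℕ) (hk : k ≤ nseq (i + 1))
    (hlt : k * ((uSeq a b nseq i).length + 1) + (uSeq a b nseq i).length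
      < (uSeq a b nseq (i + 1)).length) :
    (uSeq a b nseq (i + 1))[k * ((uSeq a b nseq i).length + 1) + (uSeq a b nseq i).length] =
      if k = 0 then a else b := by
  have hdef : uSeq a b nseq (i + 1) =
      uSeq a b nseq i ++ [a] ++ wpow (uSeq a b nseq i ++ [b]) (nseq (i + 1))
        ++ uSeq a b nseq i := by
    simp [uSeq]
  have hlw : (wpow (uSeq a b nseq i ++ [b]) (nseq (i + 1))).length
      = nseq (i + 1) * ((uSeq a b nseq i).length + 1) := by simp [length_wpow]
  rcases Nat.eq_zero_or_pos k with rfl | hkpos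
  · rw [if_pos rfl]
    simp only [Nat.zero_mul, Nat.zero_add, hdef]
    rw [List.getElem_append_left
        (by simp only [List.length_append, List.length_cons, List.length_nil, hlw]; omega),
      List.getElem_append_left (by simp),
      List.getElem_concat_length rfl]
  · obtain ⟨k, rfl⟩ : ∃ k', k = k' + 1 := ⟨k - 1, by omega⟩
    have e1 : (k + 1) * ((uSeq a b nseq i).length + 1)
        = k * ((uSeq a b nseq i).length + 1) + ((uSeq a b nseq i).length + 1) :=
      Nat.succ_mul _ _
    have hkm : k * ((uSeq a b nseq i).length + 1) + ((uSeq a b nseq i).length + 1)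
        ≤ nseq (i + 1) * ((uSeq a b nseq i).length + 1) :=
      e1 ▸ Nat.mul_le_mul_right _ hk
    rw [if_neg (by omega)]
    simp only [hdef]
    rw [List.getElem_append_left
        (by simp only [List.length_append, List.length_cons, List.length_nil, hlw]; omega),
      List.getElem_append_right
        (by simp only [List.length_append, List.length_cons, List.length_nil]; omega)]
    have e2 : (k + 1) * ((uSeq a b nseq i).length + 1) + (uSeq a b nseq i).length
        - (uSeq a b nseq i ++ [a]).length = k * ((uSeq a b nseq i).length + 1)
        + (uSeq a b nseq i).length := by
      simp only [List.length_append, List.length_cons, List.length_nil]; omega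
    simp only [e2, wpow]
    have hblk : ∀ x ∈ List.replicate (nseq (i + 1)) (uSeq a b nseq i ++ [b]),
        x.length = (uSeq a b nseq i).length + 1 := by
      intro x hx
      rw [eq_of_mem_replicate hx]
      simp
    have hflen : (List.replicate (nseq (i + 1)) (uSeq a b nseq i ++ [b])).flatten.length
        = nseq (i + 1) * ((uSeq a b nseq i).length + 1) := by
      simpa [wpow] using hlw
    rw [getElem_flatten_uniform hblk (by simp; omega) (by omega) (by omega)]
    simp only [List.getElem_replicate]
    exact List.getElem_concat_length rfl _

lemma marker {U : ℕ → A} (hU : ∀ i : ℕ, OccursAt U (uSeq a b nseq i) 0) (i q k : ℕ)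
    (hk : k ≤ nseq (i + 1)) :
    U (q * ((uSeq a b nseq (i + 1)).length + 1) + k * ((uSeq a b nseq i).length + 1)
        + (uSeq a b nseq i).length) = if k = 0 then a else b := by
  set ℓ := (uSeq a b nseq i).length with hℓ
  set n := nseq (i + 1) with hn
  have hms : (uSeq a b nseq (i + 1)).length + 1 = (n + 2) * (ℓ + 1) :=
    length_uSeq_succ a b nseq i
  obtain ⟨d, _, hocc⟩ := occ_block a b nseq hU (i + 1) q
  have hkm : k * (ℓ + 1) ≤ n * (ℓ + 1) := Nat.mul_le_mul_right _ hk
  have e1 : (n + 2) * (ℓ + 1) = n * (ℓ + 1) + 2 * (ℓ + 1) := by ring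
  have hlt : k * (ℓ + 1) + ℓ < (uSeq a b nseq (i + 1)).length := by omega
  have h := (occursAt_iff U _ _).1 hocc (k * (ℓ + 1) + ℓ) (by simp; omega)
  rw [List.getElem_append_left hlt, letter_uSeq_succ a b nseq i k hk hlt] at h
  rw [← Nat.add_assoc] at h
  exact h.symm

lemma occ_dvd (hab : a ≠ b) (hpos : ∀ i, 1 ≤ i → 1 ≤ nseq i)
    {U : ℕ → A} (hU : ∀ i : ℕ, OccursAt U (uSeq a b nseq i) 0) :
    ∀ i j, OccursAt U (uSeq a b nseq i) j → ((uSeq a b nseq i).length + 1) ∣ j := by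
  intro i
  induction i with
  | zero =>
    intro j _
    simp [uSeq]
  | succ i ih =>
    intro j hocc
    set ℓ := (uSeq a b nseq i).length with hℓ
    set n := nseq (i + 1) with hn
    have hn1 : 1 ≤ n := hpos (i + 1) (by omega)
    have hms : (uSeq a b nseq (i + 1)).length + 1 = (n + 2) * (ℓ + 1) :=
      length_uSeq_succ a b nseq i
    have hpre : uSeq a b nseq i <+: uSeq a b nseq (i + 1) :=
      ⟨[a] ++ wpow (uSeq a b nseq i ++ [b]) n ++ uSeq a b nseq i, by
        simp [uSeq, List.append_assoc, hn]⟩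
    obtain ⟨q, hjq⟩ := ih j (occursAt_of_prefix hpre hocc)
    have hocciff := (occursAt_iff U _ _).1 hocc
    have hmark : ∀ k, k ≤ n → U (j + (k * (ℓ + 1) + ℓ)) = if k = 0 then a else b := by
      intro k hk
      have hkm : k * (ℓ + 1) ≤ n * (ℓ + 1) := Nat.mul_le_mul_right _ hk
      have e1 : (n + 2) * (ℓ + 1) = n * (ℓ + 1) + 2 * (ℓ + 1) := by ring
      have hlt : k * (ℓ + 1) + ℓ < (uSeq a b nseq (i + 1)).length := by omega
      rw [← hocciff (k * (ℓ + 1) + ℓ) hlt, letter_uSeq_succ a b nseq i k hk hlt]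
    obtain ⟨p, s, hs, hq⟩ : ∃ p s, s < n + 2 ∧ q = p * (n + 2) + s := by
      exact ⟨q / (n + 2), q % (n + 2), Nat.mod_lt _ (by omega), (Nat.div_add_mod' q (n + 2)).symm⟩
    by_cases hs0 : s = 0
    · refine ⟨p, ?_⟩
      rw [hjq, hq, hs0, hms]
      ring
    · exfalso
      by_cases hsn : s ≤ n
      · have h1 := hmark 0 (Nat.zero_le _)
        have h2 := marker a b nseq hU i p s (by omega)
        rw [if_pos rfl] at h1
        rw [if_neg hs0] at h2
        have heq : j + (0 * (ℓ + 1) + ℓ)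
            = p * ((uSeq a b nseq (i + 1)).length + 1) + s * (ℓ + 1) + ℓ := by
          rw [hjq, hq, hms]; ring
        rw [heq, h2] at h1
        exact hab h1.symm
      · have hsval : s = n + 1 := by omega
        have h1 := hmark 1 hn1
        have h2 := marker a b nseq hU i (p + 1) 0 (Nat.zero_le _)
        rw [if_neg one_ne_zero] at h1
        rw [if_pos rfl] at h2
        have heq : j + (1 * (ℓ + 1) + ℓ)
            = (p + 1) * ((uSeq a b nseq (i + 1)).length + 1) + 0 * (ℓ + 1) + ℓ := by
          rw [hjq, hq, hsval, hms]; ring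
        rw [heq, h2] at h1
        exact hab h1

end ToeplitzAux

open PeriodicityComplexity

/-- In the generalized Toeplitz construction: for every `i ≥ 1` both
`u_i a` and `u_i b` are nonempty products of words from `{u_{i-1} a, u_{i-1} b}`, and every
occurrence of `u_i` in `U` starts at a position divisible by `|u_i| + 1`. -/
theorem toeplitz_occurrences
    {A : Type*} (a b : A) (hab : a ≠ b)
    (nseq : ℕ → ℕ) (hpos : ∀ i, 1 ≤ i → 1 ≤ nseq i) (hn1 : 2 ≤ nseq 1)
    (U : ℕ → A) (hU : ∀ i : ℕ, OccursAt U (uSeq a b nseq i) 0) :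
    (∀ i, 1 ≤ i → ∀ c : A, c = a ∨ c = b →
      ∃ L : List (List A), L ≠ [] ∧
        (∀ x ∈ L, x = uSeq a b nseq (i - 1) ++ [a] ∨ x = uSeq a b nseq (i - 1) ++ [b]) ∧
        L.flatten = uSeq a b nseq i ++ [c]) ∧
    (∀ i, 1 ≤ i → ∀ j : ℕ, OccursAt U (uSeq a b nseq i) j →
      ((uSeq a b nseq i).length + 1) ∣ j) := by
  constructor
  · intro i hi c hc
    exact ToeplitzAux.uSeq_decomp a b nseq (i - 1) i (by omega) c hc
  · intro i _ j h
    exact ToeplitzAux.occ_dvd a b nseq hab hpos hU i j h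
end

section
/- Let (n_i)_{i≥1} be a sequence of positive integers with n_1 ≥ 2, define u_0 = ε and u_i = u_{i-1} a (u_{i-1} b)^{n_i} u_{i-1} over {a,b}, let U be the infinite word having every u_i as a prefix, and for j ≥ 1 set d_j = |u_{j-1} a u_{j-2} a ⋯ u_1 a a|. Then the local period of U at position d_j equals (n_j + 1)(|u_{j-1}| + 1) for every j ≥ 1. -/
open scoped BigOperators ENNReal

open PeriodicityComplexity


namespace PeriodicityComplexity

section ToeplitzAux

variable {A : Type*}

lemma occursAt_iff {w : ℕ → A} {z : List A} {m : ℕ} :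
    OccursAt w z m ↔ ∀ t (ht : t < z.length), z[t] = w (m + t) := by
  constructor
  · intro h t ht
    have h2 := List.get_of_eq h ⟨t, ht⟩
    rw [List.get_ofFn] at h2
    simpa using h2
  · intro h
    apply List.ext_getElem (by simp)
    intro i h1 h2
    simp [List.getElem_ofFn, h i h1]

lemma occursAt_ofFn (w : ℕ → A) (m q : ℕ) :
    OccursAt w (List.ofFn (fun t : Fin q => w (m + t))) m := by
  rw [occursAt_iff]
  intro t ht
  simp

lemma wpow_succ (v : List A) (e : ℕ) : wpow v (e+1) = v ++ wpow v e := by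
  simp [wpow, List.replicate_succ]

lemma wpow_length (v : List A) (e : ℕ) : (wpow v e).length = e * v.length := by
  induction e with
  | zero => simp [wpow]
  | succ e ih => rw [wpow_succ]; simp [ih, Nat.succ_mul]; ring

lemma occursAt_append {w : ℕ → A} {x y : List A} {m : ℕ} :
    OccursAt w (x ++ y) m ↔ OccursAt w x m ∧ OccursAt w y (m + x.length) := by
  simp only [occursAt_iff]
  constructor
  · intro h
    refine ⟨fun t ht => ?_, fun t ht => ?_⟩
    · have h2 := h t (by simp; omega)
      rwa [List.getElem_append_left ht] at h2
    · have h2 := h (x.length + t) (by simp; omega)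
      rw [List.getElem_append_right (by omega)] at h2
      simpa [Nat.add_assoc, Nat.add_sub_cancel_left] using h2
  · rintro ⟨h1, h2⟩ t ht
    rcases Nat.lt_or_ge t x.length with h | h
    · rw [List.getElem_append_left h]; exact h1 t h
    · rw [List.getElem_append_right h]
      have := h2 (t - x.length) (by simp at ht; omega)
      rw [this]; congr 1; omega

lemma occ_wpow {w : ℕ → A} {v : List A} {e m : ℕ} (h : OccursAt w (wpow v e) m) :
    ∀ k < e, OccursAt w v (m + k * v.length) := by
  induction e generalizing m with
  | zero => omega
  | succ e ih =>
    rw [wpow_succ, occursAt_append] at h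
    intro k hk
    match k with
    | 0 => simpa using h.1
    | k+1 =>
      have := ih h.2 k (by omega)
      have heq : m + v.length + k * v.length = m + (k+1) * v.length := by ring
      rwa [heq] at this

lemma occ_single {w : ℕ → A} {c : A} {m : ℕ} (h : OccursAt w [c] m) : w m = c := by
  rw [occursAt_iff] at h
  simpa using (h 0 (by simp)).symm

lemma occ_eq_occ {w : ℕ → A} {z : List A} {m m' : ℕ} (h : OccursAt w z m)
    (h' : OccursAt w z m') {t : ℕ} (ht : t < z.length) : w (m + t) = w (m' + t) := by
  rw [occursAt_iff] at h h'
  rw [← h t ht, h' t ht]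

end ToeplitzAux

/-- `Λ i = |u_i| + 1`, the block length at level `i+1`. -/
def Lam (a b : A) (nseq : ℕ → ℕ) (i : ℕ) : ℕ := (uSeq a b nseq i).length + 1

/-- `dd j = d_j`, the tower-prefix length. -/
def dd (a b : A) (nseq : ℕ → ℕ) : ℕ → ℕ
  | 0 => 0
  | i + 1 => Lam a b nseq i + dd a b nseq i

section ToeplitzMain

variable {A : Type*} (a b : A) (nseq : ℕ → ℕ)

lemma Lam_zero : Lam a b nseq 0 = 1 := rfl

lemma Lam_succ (i : ℕ) : Lam a b nseq (i+1) = (nseq (i+1) + 2) * Lam a b nseq i := by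
  simp only [Lam, uSeq, List.length_append, List.length_cons, List.length_nil, wpow_length,
    List.length_append]
  ring

lemma Lam_pos (i : ℕ) : 1 ≤ Lam a b nseq i := Nat.succ_le_succ (Nat.zero_le _)

variable (U : ℕ → A) (hU : ∀ i : ℕ, OccursAt U (uSeq a b nseq i) 0)

lemma occ_decomp {i m : ℕ} (h : OccursAt U (uSeq a b nseq (i+1)) m) :
    (∀ r ≤ nseq (i+1) + 1, OccursAt U (uSeq a b nseq i) (m + r * Lam a b nseq i)) ∧
    U (m + (uSeq a b nseq i).length) = a ∧
    (∀ r, 1 ≤ r → r ≤ nseq (i+1) → U (m + r * Lam a b nseq i + (uSeq a b nseq i).length) = b) := by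
  set L := Lam a b nseq i with hL
  set n := nseq (i+1)
  set ui := uSeq a b nseq i
  have hlen : ui.length + 1 = L := rfl
  rw [show uSeq a b nseq (i+1) = ui ++ [a] ++ wpow (ui ++ [b]) n ++ ui from rfl] at h
  rw [occursAt_append] at h
  obtain ⟨h1, h4⟩ := h
  rw [occursAt_append] at h1
  obtain ⟨h1, h3⟩ := h1
  rw [occursAt_append] at h1
  obtain ⟨h1, h2⟩ := h1
  have hwlen : (wpow (ui ++ [b]) n).length = n * L := by
    rw [wpow_length]; simp [← hlen]
  have h3' := occ_wpow h3
  have key : ∀ k < n, OccursAt U (ui ++ [b]) (m + (k+1) * L) := by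
    intro k hk
    have := h3' k hk
    have heq : m + (ui ++ [a]).length + k * (ui ++ [b]).length = m + (k+1) * L := by
      simp [← hlen]; ring
    rwa [heq] at this
  refine ⟨?_, ?_, ?_⟩
  · intro r hr
    rcases Nat.eq_zero_or_pos r with rfl | hr1
    · simpa using h1
    rcases Nat.lt_or_ge r (n+1) with hr2 | hr2
    · have := (occursAt_append.mp (key (r-1) (by omega))).1
      have heq : r - 1 + 1 = r := by omega
      rwa [heq] at this
    · have hr3 : r = n + 1 := by omega
      subst hr3
      have heq : m + (ui ++ [a] ++ wpow (ui ++ [b]) n).length = m + (n+1) * L := by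
        simp only [List.length_append, List.length_cons, List.length_nil, hwlen]
        simp [← hlen]; ring
      rwa [heq] at h4
  · exact occ_single h2
  · intro r hr1 hr2
    have h5 := key (r-1) (by omega)
    have hr' : r - 1 + 1 = r := by omega
    rw [hr'] at h5
    exact occ_single (occursAt_append.mp h5).2

include hU

lemma block : ∀ k i, OccursAt U (uSeq a b nseq i) (k * Lam a b nseq i) := by
  intro k
  induction k using Nat.strong_induction_on with
  | _ k ih =>
    intro i
    rcases Nat.eq_zero_or_pos k with rfl | hk
    · simpa using hU i
    obtain ⟨q0, r0, hrk, hqk, hk2⟩ :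
        ∃ q r, r < nseq (i+1) + 2 ∧ q < k ∧ k = q * (nseq (i+1) + 2) + r := by
      refine ⟨k / (nseq (i+1) + 2), k % (nseq (i+1) + 2), Nat.mod_lt _ (by omega),
        Nat.div_lt_self hk (by omega), ?_⟩
      rw [Nat.mul_comm]
      exact (Nat.div_add_mod k _).symm
    have hb := ih q0 hqk (i+1)
    have hd := (occ_decomp a b nseq U hb).1 r0 (by omega)
    have heq : q0 * Lam a b nseq (i+1) + r0 * Lam a b nseq i = k * Lam a b nseq i := by
      rw [Lam_succ, hk2]; ring
    rwa [heq] at hd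

lemma block_pt (k i t : ℕ) (ht : t < (uSeq a b nseq i).length) :
    U (k * Lam a b nseq i + t) = U t := by
  have h0 := block a b nseq U hU 0 i
  simp only [Nat.zero_mul] at h0
  have := occ_eq_occ (block a b nseq U hU k i) h0 ht
  simpa using this

lemma sepa (i k : ℕ) : U (k * Lam a b nseq (i+1) + (uSeq a b nseq i).length) = a :=
  (occ_decomp a b nseq U (block a b nseq U hU k (i+1))).2.1

lemma sepb (i k r : ℕ) (h1 : 1 ≤ r) (h2 : r ≤ nseq (i+1)) :
    U (k * Lam a b nseq (i+1) + r * Lam a b nseq i + (uSeq a b nseq i).length) = b :=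
  (occ_decomp a b nseq U (block a b nseq U hU k (i+1))).2.2 r h1 h2

omit hU

lemma dd_le_len : ∀ i, dd a b nseq i ≤ (uSeq a b nseq i).length := by
  intro i
  induction i with
  | zero => simp [dd]
  | succ i ih =>
    have h1 : Lam a b nseq (i+1) = (nseq (i+1) + 2) * Lam a b nseq i := Lam_succ a b nseq i
    have h2 : Lam a b nseq i = (uSeq a b nseq i).length + 1 := rfl
    have h3 : Lam a b nseq (i+1) = (uSeq a b nseq (i+1)).length + 1 := rfl
    show Lam a b nseq i + dd a b nseq i ≤ _
    nlinarith [Nat.zero_le (nseq (i+1))]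

lemma dd2_lt (hpos : ∀ i, 1 ≤ i → 1 ≤ nseq i) : ∀ i, 2 * dd a b nseq i < Lam a b nseq i := by
  intro i
  induction i with
  | zero => simp [dd, Lam_zero]
  | succ i ih =>
    have h1 : Lam a b nseq (i+1) = (nseq (i+1) + 2) * Lam a b nseq i := Lam_succ a b nseq i
    have h2 := hpos (i+1) (by omega)
    have h3 : 3 * Lam a b nseq i ≤ Lam a b nseq (i+1) := by rw [h1]; nlinarith
    show 2 * (Lam a b nseq i + dd a b nseq i) < _
    omega

include hU

lemma occa (hab : a ≠ b) (hpos : ∀ i, 1 ≤ i → 1 ≤ nseq i) :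
    ∀ i m, U m = a → (∀ t, t < dd a b nseq i → U (m + 1 + t) = U t) →
    Lam a b nseq i ∣ (m + 1) := by
  intro i
  induction i with
  | zero => intro m _ _; rw [Lam_zero]; exact one_dvd _
  | succ i ih =>
    intro m hm hp
    have hdd : dd a b nseq (i+1) = Lam a b nseq i + dd a b nseq i := rfl
    have hL : Lam a b nseq i = (uSeq a b nseq i).length + 1 := rfl
    have hddle := dd_le_len a b nseq i
    have h1 : Lam a b nseq i ∣ (m + 1) := ih m hm (fun t ht => hp t (by omega))
    obtain ⟨k, hk⟩ := h1
    have hk1 : 1 ≤ k := by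
      rcases Nat.eq_zero_or_pos k with rfl | h
      · omega
      · exact h
    have hsa : U ((uSeq a b nseq i).length) = a := by
      have := sepa a b nseq U hU i 0
      simpa using this
    have hm2 : U (m + Lam a b nseq i) = a := by
      have h2 := hp (uSeq a b nseq i).length (by omega)
      rw [show m + 1 + (uSeq a b nseq i).length = m + Lam a b nseq i by omega] at h2
      rw [h2, hsa]
    obtain ⟨q, r, hrlt, hkq⟩ :
        ∃ q r, r < nseq (i+1) + 2 ∧ k - 1 = q * (nseq (i+1) + 2) + r := by
      refine ⟨(k-1) / (nseq (i+1) + 2), (k-1) % (nseq (i+1) + 2), Nat.mod_lt _ (by omega), ?_⟩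
      rw [Nat.mul_comm]
      exact (Nat.div_add_mod _ _).symm
    have hkq' : k = q * (nseq (i+1) + 2) + r + 1 := by omega
    rcases Nat.lt_or_ge r 1 with hr0 | hr1
    · exfalso
      have hb := sepb a b nseq U hU i q 1 le_rfl (hpos (i+1) (by omega))
      have hpos' : m + Lam a b nseq i = q * Lam a b nseq (i+1) + 1 * Lam a b nseq i
          + (uSeq a b nseq i).length := by
        have : m + Lam a b nseq i + 1 = q * Lam a b nseq (i+1) + 1 * Lam a b nseq i
            + (uSeq a b nseq i).length + 1 := by
          rw [show m + Lam a b nseq i + 1 = (m + 1) + Lam a b nseq i by omega, hk, hkq',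
            Lam_succ, hL]
          have hr00 : r = 0 := by omega
          rw [hr00]; ring
        omega
      rw [hpos', hb] at hm2
      exact hab hm2.symm
    rcases Nat.lt_or_ge (nseq (i+1)) r with hr2 | hr2
    · have hr3 : r = nseq (i+1) + 1 := by omega
      refine ⟨q + 1, ?_⟩
      rw [hk, hkq', hr3, Lam_succ]
      ring
    · exfalso
      have hb := sepb a b nseq U hU i q r hr1 hr2
      have hpos' : m = q * Lam a b nseq (i+1) + r * Lam a b nseq i
          + (uSeq a b nseq i).length := by
        have : m + 1 = q * Lam a b nseq (i+1) + r * Lam a b nseq i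
            + (uSeq a b nseq i).length + 1 := by
          rw [hk, hkq', Lam_succ, hL]; ring
        omega
      rw [hpos', hb] at hm
      exact hab hm.symm

lemma lower_main (hab : a ≠ b) (hpos : ∀ i, 1 ≤ i → 1 ≤ nseq i) (i q : ℕ)
    (hq1 : dd a b nseq i < q) (hq2 : q < (nseq (i+1) + 1) * Lam a b nseq i) :
    ∃ s, dd a b nseq (i+1) - min (dd a b nseq (i+1)) q ≤ s ∧ s < dd a b nseq (i+1) ∧
      U s ≠ U (s + q) := by
  by_contra hcon
  push_neg at hcon
  have hdd : dd a b nseq (i+1) = Lam a b nseq i + dd a b nseq i := rfl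
  have hL : Lam a b nseq i = (uSeq a b nseq i).length + 1 := rfl
  have hddle := dd_le_len a b nseq i
  have hLp := Lam_pos a b nseq i
  have hsa : U ((uSeq a b nseq i).length) = a := by simpa using sepa a b nseq U hU i 0
  have hA : U ((uSeq a b nseq i).length + q) = a := by
    have := hcon ((uSeq a b nseq i).length) (by omega) (by omega)
    rw [← this, hsa]
  have hocc : ∀ t, t < dd a b nseq i → U ((uSeq a b nseq i).length + q + 1 + t) = U t := by
    intro t ht
    have h1 := hcon (Lam a b nseq i + t) (by omega) (by omega)
    have h2 : U (Lam a b nseq i + t) = U t := by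
      have := block_pt a b nseq U hU 1 i t (by omega)
      simpa using this
    rw [show (uSeq a b nseq i).length + q + 1 + t = Lam a b nseq i + t + q by omega, ← h1, h2]
  have hdvd := occa a b nseq U hU hab hpos i ((uSeq a b nseq i).length + q) hA hocc
  rw [show (uSeq a b nseq i).length + q + 1 = Lam a b nseq i + q by omega] at hdvd
  have hdvd2 : Lam a b nseq i ∣ q := (Nat.dvd_add_right dvd_rfl).mp hdvd
  obtain ⟨c, hc⟩ := hdvd2
  have hc1 : 1 ≤ c := by
    rcases Nat.eq_zero_or_pos c with rfl | h
    · omega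
    · exact h
  have hc2 : c ≤ nseq (i+1) := by
    by_contra hcc
    push_neg at hcc
    have : (nseq (i+1) + 1) * Lam a b nseq i ≤ Lam a b nseq i * c := by
      calc (nseq (i+1) + 1) * Lam a b nseq i = Lam a b nseq i * (nseq (i+1) + 1) := by ring
      _ ≤ Lam a b nseq i * c := Nat.mul_le_mul_left _ (by omega)
    omega
  have hb := sepb a b nseq U hU i 0 c hc1 hc2
  simp only [Nat.zero_mul, Nat.zero_add] at hb
  rw [show (uSeq a b nseq i).length + q = c * Lam a b nseq i + (uSeq a b nseq i).length by
    rw [hc]; ring] at hA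
  rw [hA] at hb
  exact hab hb

lemma lower (hab : a ≠ b) (hpos : ∀ i, 1 ≤ i → 1 ≤ nseq i) :
    ∀ i q, 1 ≤ q → q < (nseq (i+1) + 1) * Lam a b nseq i →
    ∃ s, dd a b nseq (i+1) - min (dd a b nseq (i+1)) q ≤ s ∧ s < dd a b nseq (i+1) ∧
      U s ≠ U (s + q) := by
  intro i
  induction i with
  | zero =>
    intro q hq1 hq2
    exact lower_main a b nseq U hU hab hpos 0 q (by simp [dd]; omega) hq2
  | succ i ih =>
    intro q hq1 hq2
    rcases Nat.lt_or_ge (dd a b nseq (i+1)) q with hle | hle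
    · exact lower_main a b nseq U hU hab hpos (i+1) q hle hq2
    · have hdd1 : dd a b nseq (i+1) = Lam a b nseq i + dd a b nseq i := rfl
      have hdd2 : dd a b nseq (i+1+1) = Lam a b nseq (i+1) + dd a b nseq (i+1) := rfl
      have h2d := dd2_lt a b nseq hpos i
      have h2d1 := dd2_lt a b nseq hpos (i+1)
      have hLp := Lam_pos a b nseq i
      have hddle1 := dd_le_len a b nseq (i+1)
      have hL1 : Lam a b nseq (i+1) = (uSeq a b nseq (i+1)).length + 1 := rfl
      have hq2' : q < (nseq (i+1) + 1) * Lam a b nseq i := by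
        have h1 : 2 * Lam a b nseq i ≤ (nseq (i+1) + 1) * Lam a b nseq i :=
          Nat.mul_le_mul_right _ (by have := hpos (i+1) (by omega); omega)
        omega
      obtain ⟨s', hs1, hs2, hs3⟩ := ih q hq1 hq2'
      refine ⟨Lam a b nseq (i+1) + s', by omega, by omega, ?_⟩
      have e1 : U (Lam a b nseq (i+1) + s') = U s' := by
        have := block_pt a b nseq U hU 1 (i+1) s' (by omega)
        simpa using this
      have e2 : U (Lam a b nseq (i+1) + s' + q) = U (s' + q) := by
        have := block_pt a b nseq U hU 1 (i+1) (s' + q) (by omega)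
        simpa [Nat.add_assoc] using this
      rw [e1, e2]
      exact hs3

lemma upper (i s : ℕ) (hs : s < dd a b nseq (i+1)) :
    U (s + (nseq (i+1) + 1) * Lam a b nseq i) = U s := by
  have hdd : dd a b nseq (i+1) = Lam a b nseq i + dd a b nseq i := rfl
  have hL : Lam a b nseq i = (uSeq a b nseq i).length + 1 := rfl
  have hL1 : Lam a b nseq (i+1) = (uSeq a b nseq (i+1)).length + 1 := rfl
  have hddle := dd_le_len a b nseq i
  have e : (nseq (i+1) + 1) * Lam a b nseq i + Lam a b nseq i = Lam a b nseq (i+1) := by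
    rw [Lam_succ]; ring
  rcases Nat.lt_trichotomy s (uSeq a b nseq i).length with h | h | h
  · have := block_pt a b nseq U hU (nseq (i+1) + 1) i s h
    rwa [Nat.add_comm] at this
  · subst h
    rw [show (uSeq a b nseq i).length + (nseq (i+1) + 1) * Lam a b nseq i
        = (uSeq a b nseq (i+1)).length by omega]
    have g1 : U ((uSeq a b nseq (i+1)).length) = a := by
      simpa using sepa a b nseq U hU (i+1) 0
    have g2 : U ((uSeq a b nseq i).length) = a := by simpa using sepa a b nseq U hU i 0
    rw [g1, g2]
  · have ht : s - Lam a b nseq i < dd a b nseq i := by omega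
    have e1 : U s = U (s - Lam a b nseq i) := by
      have := block_pt a b nseq U hU 1 i (s - Lam a b nseq i) (by omega)
      simp only [Nat.one_mul] at this
      rw [show Lam a b nseq i + (s - Lam a b nseq i) = s by omega] at this
      exact this
    have e2 : U (s + (nseq (i+1) + 1) * Lam a b nseq i) = U (s - Lam a b nseq i) := by
      have := block_pt a b nseq U hU 1 (i+1) (s - Lam a b nseq i) (by omega)
      simp only [Nat.one_mul] at this
      rw [show Lam a b nseq (i+1) + (s - Lam a b nseq i)
          = s + (nseq (i+1) + 1) * Lam a b nseq i by omega] at this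
      exact this
    rw [e1, e2]

omit hU in
lemma wordPrefix_getElem? (n t : ℕ) (h : t < n) :
    (List.ofFn (fun s : Fin n => U s))[t]? = some (U t) := by
  rw [List.getElem?_eq_getElem (by simpa using h)]
  simp

omit hU in
lemma pos_eq : ∀ i, (∑ t ∈ Finset.Icc 1 i, ((uSeq a b nseq t).length + 1)) + 1
    = dd a b nseq (i+1) := by
  intro i
  induction i with
  | zero => simp [dd, Lam, uSeq]
  | succ i ih =>
    rw [Finset.sum_Icc_succ_top (by omega)]
    have h1 : dd a b nseq (i+1+1) = Lam a b nseq (i+1) + dd a b nseq (i+1) := rfl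
    have h2 : Lam a b nseq (i+1) = (uSeq a b nseq (i+1)).length + 1 := rfl
    omega

lemma toeplitz_main (hab : a ≠ b) (hpos : ∀ i, 1 ≤ i → 1 ≤ nseq i) (i : ℕ) :
    localPeriod U (dd a b nseq (i+1))
      = (((nseq (i+1) + 1) * Lam a b nseq i : ℕ) : ℝ≥0∞) := by
  set Q := (nseq (i+1) + 1) * Lam a b nseq i with hQ
  set D := dd a b nseq (i+1) with hD
  have hdd1 : D = Lam a b nseq i + dd a b nseq i := rfl
  have h2d := dd2_lt a b nseq hpos i
  have hLp := Lam_pos a b nseq i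
  have hQdd : D ≤ Q := by
    have h1 : 2 * Lam a b nseq i ≤ Q := by
      rw [hQ]
      exact Nat.mul_le_mul_right _ (by have := hpos (i+1) (by omega); omega)
    omega
  have hQpos : 1 ≤ Q := by omega
  have hocc : OccursAt U (List.ofFn (fun t : Fin Q => U (D + t))) D := occursAt_ofFn U D Q
  have hRlen : (List.ofFn (fun t : Fin Q => U (D + t))).length = Q := by
    rw [List.length_ofFn]
  have hdropR : (List.ofFn (fun t : Fin Q => U (D + t))).drop (Q - D) = wordPrefix U D := by
    apply List.ext_getElem (by rw [List.length_drop, hRlen]; simp [wordPrefix]; omega)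
    intro t h1 h2
    rw [List.getElem_drop]
    have ht : t < D := by simpa [wordPrefix] using h2
    have e1 : (List.ofFn (fun t : Fin Q => U (D + t)))[Q - D + t]'(by
        rw [hRlen]; omega) = U (D + (Q - D + t)) :=
      List.getElem_ofFn _
    have e2 : D + (Q - D + t) = t + Q := by omega
    have e3 : U (t + Q) = U t := upper a b nseq U hU i t (by omega)
    rw [e1, e2, e3]
    simp [wordPrefix]
  have hsuf : wordPrefix U D <:+ (List.ofFn (fun t : Fin Q => U (D + t))) :=
    hdropR ▸ List.drop_suffix _ _
  have hrep : IsRepWordAt U D (List.ofFn (fun t : Fin Q => U (D + t))) := by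
    refine ⟨?_, Or.inr hsuf, hocc⟩
    intro hnil
    rw [hnil] at hRlen
    simp at hRlen
    omega
  apply le_antisymm
  · apply sInf_le
    exact ⟨List.ofFn (fun t : Fin Q => U (D + t)), hrep, by simp only [hRlen]⟩
  · apply le_sInf
    rintro x ⟨r, hr, rfl⟩
    simp only
    rw [Nat.cast_le]
    by_contra hlt
    push_neg at hlt
    obtain ⟨hne, hcmp, hoccr⟩ := hr
    have hq1 : 1 ≤ r.length := List.length_pos_iff.mpr hne
    obtain ⟨s, hs1, hs2, hs3⟩ := lower a b nseq U hU hab hpos i r.length hq1 (by omega)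
    apply hs3
    rw [occursAt_iff] at hoccr
    have hwlen : (wordPrefix U D).length = D := by simp [wordPrefix]
    rcases hcmp with ⟨w, hw⟩ | ⟨w, hw⟩
    · have hlen : w.length + r.length = D := by
        have := congrArg List.length hw
        simpa [hwlen] using this
      rw [← hD] at hs1 hs2
      have hsw : w.length ≤ s := by omega
      have h1 : (wordPrefix U D)[s]? = some (U s) := by
        rw [wordPrefix]
        exact wordPrefix_getElem? U D s (by omega)
      rw [← hw, List.getElem?_append_right hsw] at h1
      have hsq : s - w.length < r.length := by omega
      have h2 : r[s - w.length]? = some (U (D + (s - w.length))) := by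
        rw [List.getElem?_eq_getElem hsq, hoccr _ hsq]
      rw [h1] at h2
      have h3 : U s = U (D + (s - w.length)) := Option.some_injective _ h2
      rw [h3]
      congr 1
      omega
    · have hlen : w.length + D = r.length := by
        have := congrArg List.length hw
        simpa [hwlen] using this
      rw [← hD] at hs1 hs2
      have h1 : (wordPrefix U D)[s]? = some (U s) := by
        rw [wordPrefix]
        exact wordPrefix_getElem? U D s (by omega)
      have h2 : r[w.length + s]? = some (U s) := by
        rw [← hw, List.getElem?_append_right (by omega)]
        simpa using h1
      have hsq : w.length + s < r.length := by omega
      rw [List.getElem?_eq_getElem hsq, hoccr _ hsq] at h2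
      have h3 : U (D + (w.length + s)) = U s := Option.some_injective _ h2
      rw [← h3]
      congr 1
      omega

end ToeplitzMain

end PeriodicityComplexity

/-- In the generalized Toeplitz construction, the local period of `U` at
position `d_j = |u_{j-1} a u_{j-2} a ⋯ u_1 a a|` equals `(n_j + 1)(|u_{j-1}| + 1)` for every
`j ≥ 1`. -/
theorem toeplitz_localPeriod
    {A : Type*} (a b : A) (hab : a ≠ b)
    (nseq : ℕ → ℕ) (hpos : ∀ i, 1 ≤ i → 1 ≤ nseq i) (hn1 : 2 ≤ nseq 1)
    (U : ℕ → A) (hU : ∀ i : ℕ, OccursAt U (uSeq a b nseq i) 0) :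
    ∀ j : ℕ, 1 ≤ j →
      localPeriod U ((∑ t ∈ Finset.Icc 1 (j - 1), ((uSeq a b nseq t).length + 1)) + 1) =
        (((nseq j + 1) * ((uSeq a b nseq (j - 1)).length + 1) : ℕ) : ℝ≥0∞) := by
  intro j hj
  obtain ⟨i, rfl⟩ : ∃ i, j = i + 1 := ⟨j - 1, by omega⟩
  simp only [Nat.add_sub_cancel]
  rw [pos_eq a b nseq]
  exact toeplitz_main a b nseq U hU hab hpos i
end
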